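/- Let V be a finite-dimensional vector space over a field F, let A_1,…,A_n, C be subspaces such that V = A_1 ⊕ ⋯ ⊕ A_n and C ∩ (Σ_{i≠k} A_i) = 0 for every k. Let S_1,…,S_m be nonempty subsets of {1,…,n} whose associated n×m 0/1 matrix over F (entry (j,i) is 1 iff j ∈ S_i) has rank m − 1. Set B'' := { i : |S_i| = 1 } and B' := { i : 1 < |S_i| < n }, and for each i ∈ B' let B_i be a subspace of V. Assume: (i) for every i ∈ B'' with S_i = {j}, A_j ⊆ (Σ_{l≠j} A_l) + C; (ii) for every i ∈ B', B_i ⊆ Σ_{j∈S_i} A_j; and (iii) for every i ∈ B', B_i ⊆ (Σ_{j∉S_i} A_j) + C. Then dim( Σ_{i∈B'} B_i + Σ_{i∈B'', S_i={j}} A_j + C' ) ≤ (m − 1) · dim C, where C' := C if some S_i equals {1,…,n} and C' := 0 otherwise. -/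

import Mathlib

open Finset

section aux
variable {F V : Type*} [Field F] [AddCommGroup V] [Module F V]

theorem mySum_le {ι : Type*} (t : Finset ι) (f : ι → Submodule F V) (Q : Submodule F V)
    (h : ∀ i ∈ t, f i ≤ Q) : (∑ i ∈ t, f i) ≤ Q := by
  classical
  induction t using Finset.induction with
  | empty => simp
  | insert _ _ hni ih =>
    rename_i a s
    rw [Finset.sum_insert hni, Submodule.add_eq_sup]
    exact sup_le (h a (mem_insert_self a s)) (ih fun i hi => h i (mem_insert_of_mem hi))

theorem myLe_sum {ι : Type*} (t : Finset ι) (f : ι → Submodule F V) {j : ι} (hj : j ∈ t) :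
    f j ≤ ∑ i ∈ t, f i := by
  classical
  rw [← Finset.add_sum_erase t f hj, Submodule.add_eq_sup]
  exact le_sup_left

theorem myFinrank_sum_le {ι : Type*} [FiniteDimensional F V] (t : Finset ι)
    (f : ι → Submodule F V) :
    Module.finrank F (∑ i ∈ t, f i : Submodule F V) ≤ ∑ i ∈ t, Module.finrank F (f i) := by
  classical
  induction t using Finset.induction with
  | empty => simp only [Finset.sum_empty]; exact (finrank_bot F V).le
  | insert _ _ hni ih =>
    rename_i a s
    rw [Finset.sum_insert hni, Finset.sum_insert hni, Submodule.add_eq_sup]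
    exact (Submodule.finrank_add_le_finrank_add_finrank _ _).trans (by omega)

variable {n : ℕ} (A : Fin n → Submodule F V) (hA : DirectSum.IsInternal A)

noncomputable def myProj (j : Fin n) : V →ₗ[F] V :=
  (A j).subtype ∘ₗ (DirectSum.component F (Fin n) (fun i => A i) j) ∘ₗ
    (LinearEquiv.ofBijective (DirectSum.coeLinearMap A) hA).symm.toLinearMap

theorem myProj_apply (j : Fin n) (x : V) :
    myProj A hA j x =
      ↑(((LinearEquiv.ofBijective (DirectSum.coeLinearMap A) hA).symm x) j) := rfl

theorem myProj_same {j : Fin n} {x : V} (hx : x ∈ A j) : myProj A hA j x = x := by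
  rw [myProj_apply, hA.ofBijective_coeLinearMap_of_mem hx]

theorem myProj_ne {j k : Fin n} (hjk : k ≠ j) {x : V} (hx : x ∈ A k) :
    myProj A hA j x = 0 := by
  rw [myProj_apply, hA.ofBijective_coeLinearMap_of_mem_ne hjk hx, Submodule.coe_zero]

theorem myProj_sum (x : V) : ∑ j, myProj A hA j x = x := by
  set e := LinearEquiv.ofBijective (DirectSum.coeLinearMap A) hA with he
  have h1 : ∑ j, myProj A hA j x = DirectSum.coeLinearMap A (e.symm x) := by
    conv_rhs => rw [← DirectSum.sum_univ_of (e.symm x)]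
    rw [map_sum]
    exact Finset.sum_congr rfl fun j _ => by rw [DirectSum.coeLinearMap_of, myProj_apply]
  have h2 : DirectSum.coeLinearMap A (e.symm x) = e (e.symm x) := rfl
  rw [h1, h2, e.apply_symm_apply]

theorem myProjSum_eq_self (s : Finset (Fin n)) {x : V} (hx : x ∈ ∑ j ∈ s, A j) :
    (∑ j ∈ s, myProj A hA j) x = x := by
  classical
  refine mySum_le s A (LinearMap.eqLocus (∑ j ∈ s, myProj A hA j) LinearMap.id)
    (fun k hk y hy => ?_) hx
  rw [LinearMap.mem_eqLocus, LinearMap.sum_apply,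
    Finset.sum_eq_single_of_mem k hk (fun j _ hjk => myProj_ne A hA (Ne.symm hjk) hy),
    myProj_same A hA hy]
  rfl

theorem myProjSum_eq_zero (s t : Finset (Fin n)) (hst : ∀ j ∈ t, j ∉ s) {x : V}
    (hx : x ∈ ∑ j ∈ t, A j) : (∑ j ∈ s, myProj A hA j) x = 0 := by
  classical
  refine mySum_le t A (LinearMap.ker (∑ j ∈ s, myProj A hA j)) (fun k hk y hy => ?_) hx
  rw [LinearMap.mem_ker, LinearMap.sum_apply]
  exact Finset.sum_eq_zero fun j hj => myProj_ne A hA (fun h => hst k hk (by rw [h]; exact hj)) hy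

end aux

/-- Claim 2(a) of the paper: suppose `V = A_1 ⊕ ⋯ ⊕ A_n`,
`C ∩ (Σ_{i≠k} A_i) = 0` for every `k`, the sets `S_1,…,S_m` are nonempty and
their associated `n×m` 0/1 matrix over `F` has rank `m − 1`.  With
`B'' = {i : |S_i| = 1}` and `B' = {i : 1 < |S_i| < n}`, assume
(i) `A_j ⊆ Σ_{l≠j} A_l + C` whenever `S_i = {j}`,
(ii) `B_i ⊆ Σ_{j∈S_i} A_j` for `i ∈ B'`, and
(iii) `B_i ⊆ Σ_{j∉S_i} A_j + C` for `i ∈ B'`.  Then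
`dim(Σ_{i∈B'} B_i + Σ_{i∈B'', S_i={j}} A_j + C') ≤ (m−1)·dim C`, where
`C' = C` if some `S_i = {1,…,n}` and `C' = 0` otherwise. -/
theorem conditional_ineq_rank_sub_one (F V : Type*) [Field F] [AddCommGroup V]
    [Module F V] [FiniteDimensional F V] (n m : ℕ)
    (A : Fin n → Submodule F V) (hA : DirectSum.IsInternal A)
    (C : Submodule F V) (hC : ∀ k, C ⊓ (∑ i ∈ univ.erase k, A i) = ⊥)
    (S : Fin m → Finset (Fin n)) (hS : ∀ i, (S i).Nonempty)
    (hrank : (Matrix.of fun (j : Fin n) (i : Fin m) =>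
      if j ∈ S i then (1 : F) else 0).rank = m - 1)
    (B : Fin m → Submodule F V)
    (h1 : ∀ i j, S i = {j} → A j ≤ (∑ l ∈ univ.erase j, A l) + C)
    (h2 : ∀ i, 1 < (S i).card → (S i).card < n → B i ≤ ∑ j ∈ S i, A j)
    (h3 : ∀ i, 1 < (S i).card → (S i).card < n → B i ≤ (∑ j ∈ (S i)ᶜ, A j) + C) :
    Module.finrank F
      (((∑ i ∈ univ.filter (fun i => 1 < (S i).card ∧ (S i).card < n), B i)
        + (∑ i ∈ univ.filter (fun i => (S i).card = 1), ∑ j ∈ S i, A j)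
        + (if ∃ i, S i = (univ : Finset (Fin n)) then C else ⊥)) : Submodule F V)
      ≤ (m - 1) * Module.finrank F C := by
  classical
  rcases Nat.eq_zero_or_pos m with hm0 | hm0
  · subst hm0
    have he1 : (univ : Finset (Fin 0)) = ∅ := rfl
    have he2 : ¬ ∃ i : Fin 0, S i = (univ : Finset (Fin n)) := by
      rintro ⟨i, -⟩; exact i.elim0
    simp [he2, he1]
    rw [Finset.sum_eq_zero (fun i _ => i.elim0), Finset.sum_eq_zero (fun i _ => i.elim0)]
    simp only [Submodule.zero_eq_bot]
    exact Nat.le_zero.mp ((Submodule.finrank_mono (sup_le (sup_le le_rfl le_rfl) le_rfl)).trans (finrank_bot F V).le)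
  -- the columns of the matrix are linearly dependent
  set M : Matrix (Fin n) (Fin m) F :=
    Matrix.of fun (j : Fin n) (i : Fin m) => if j ∈ S i then (1 : F) else 0 with hM
  have hdep : ¬ LinearIndependent F
      (fun (i : Fin m) (j : Fin n) => if j ∈ S i then (1 : F) else 0) := by
    intro hli
    have hinj : Function.Injective M.mulVecLin := by
      rw [← LinearMap.ker_eq_bot]
      refine LinearMap.ker_eq_bot'.mpr fun v hv => ?_
      have h0 : ∑ i, v i • (fun (j : Fin n) => if j ∈ S i then (1 : F) else 0) = 0 := by
        funext j
        have hj := congrFun hv j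
        simp only [Matrix.mulVecLin_apply, Matrix.mulVec, dotProduct, hM,
          Matrix.of_apply, Pi.zero_apply] at hj
        simpa [Finset.sum_apply, mul_comm] using hj
      funext i
      exact Fintype.linearIndependent_iff.mp hli v h0 i
    have hr : M.rank = m := by
      unfold Matrix.rank
      rw [LinearMap.finrank_range_of_inj hinj, Module.finrank_fin_fun]
    rw [hrank] at hr
    omega
  obtain ⟨g, hg, i0, hgi0⟩ := Fintype.not_linearIndependent_iff.mp hdep
  have hgj : ∀ j : Fin n, ∑ i, (if j ∈ S i then g i else 0) = 0 := by
    intro j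
    have := congrFun hg j
    simpa [Finset.sum_apply, mul_ite, mul_one, mul_zero] using this
  set P : Fin m → (V →ₗ[F] V) := fun i => ∑ j ∈ S i, myProj A hA j with hP
  -- the linear relation among the P i on all of V
  have hrel : ∀ x : V, ∑ i, g i • (P i) x = 0 := by
    intro x
    calc ∑ i, g i • (P i) x
        = ∑ i, ∑ j, (if j ∈ S i then g i else 0) • myProj A hA j x := by
          refine Finset.sum_congr rfl fun i _ => ?_
          rw [hP, LinearMap.sum_apply, Finset.smul_sum]
          rw [show (∑ j ∈ S i, g i • myProj A hA j x)
              = ∑ j, if j ∈ S i then g i • myProj A hA j x else 0 by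
            rw [Finset.sum_ite_mem, Finset.univ_inter]]
          exact Finset.sum_congr rfl fun j _ => by rw [ite_smul, zero_smul]
      _ = ∑ j, (∑ i, (if j ∈ S i then g i else 0)) • myProj A hA j x := by
          rw [Finset.sum_comm]
          exact Finset.sum_congr rfl fun j _ => (Finset.sum_smul).symm
      _ = 0 := by simp [hgj]
  set T : Submodule F V := ∑ i ∈ univ.erase i0, Submodule.map (P i) C with hT
  have hP0 : Submodule.map (P i0) C ≤ T := by
    rintro _ ⟨c, hc, rfl⟩
    have h := hrel c
    rw [← Finset.add_sum_erase _ _ (mem_univ i0)] at h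
    have h' : g i0 • (P i0) c = - ∑ i ∈ univ.erase i0, g i • (P i) c :=
      eq_neg_of_add_eq_zero_left h
    have heq : (P i0) c = ∑ i ∈ univ.erase i0, (-(g i0)⁻¹ * g i) • (P i) c := by
      have : (P i0) c = (g i0)⁻¹ • (g i0 • (P i0) c) := by
        rw [smul_smul, inv_mul_cancel₀ hgi0, one_smul]
      rw [this, h', smul_neg, Finset.smul_sum, ← Finset.sum_neg_distrib]
      exact Finset.sum_congr rfl fun i _ => by rw [smul_smul, ← neg_smul, neg_mul]
    rw [heq]
    exact Submodule.sum_mem _ fun i hi =>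
      Submodule.smul_mem _ _ (myLe_sum _ _ hi (Submodule.mem_map_of_mem hc))
  have hUnivT : (∑ i ∈ (univ : Finset (Fin m)), Submodule.map (P i) C) ≤ T := by
    rw [← Finset.sum_erase_add _ _ (mem_univ i0), Submodule.add_eq_sup]
    exact sup_le le_rfl hP0
  -- each piece is inside map (P i) C
  have hB' : ∀ i, 1 < (S i).card → (S i).card < n → B i ≤ Submodule.map (P i) C := by
    intro i hi1 hi2 x hx
    have hx1 : x ∈ ∑ j ∈ S i, A j := h2 i hi1 hi2 hx
    have hx2 := h3 i hi1 hi2 hx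
    rw [Submodule.add_eq_sup, Submodule.mem_sup] at hx2
    obtain ⟨y, hy, c, hc, hyc⟩ := hx2
    refine ⟨c, hc, ?_⟩
    have hPx : (P i) x = x := myProjSum_eq_self A hA _ hx1
    have hPy : (P i) y = 0 :=
      myProjSum_eq_zero A hA (S i) (S i)ᶜ (fun j hj => Finset.mem_compl.mp hj) hy
    have : (P i) x = (P i) y + (P i) c := by rw [← map_add, hyc]
    rw [hPx, hPy, zero_add] at this
    exact this.symm
  have hB'' : ∀ i j, S i = {j} → A j ≤ Submodule.map (P i) C := by
    intro i j hj x hx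
    have hx2 := h1 i j hj hx
    rw [Submodule.add_eq_sup, Submodule.mem_sup] at hx2
    obtain ⟨y, hy, c, hc, hyc⟩ := hx2
    refine ⟨c, hc, ?_⟩
    have hPx : (P i) x = x := by
      refine myProjSum_eq_self A hA _ ?_
      rw [hj, Finset.sum_singleton]; exact hx
    have hPy : (P i) y = 0 := by
      refine myProjSum_eq_zero A hA (S i) (univ.erase j) (fun l hl => ?_) hy
      rw [hj, Finset.mem_singleton]
      exact (Finset.mem_erase.mp hl).1
    have : (P i) x = (P i) y + (P i) c := by rw [← map_add, hyc]
    rw [hPx, hPy, zero_add] at this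
    exact this.symm
  -- main inclusion
  have hW : ((∑ i ∈ univ.filter (fun i => 1 < (S i).card ∧ (S i).card < n), B i)
        + (∑ i ∈ univ.filter (fun i => (S i).card = 1), ∑ j ∈ S i, A j)
        + (if ∃ i, S i = (univ : Finset (Fin n)) then C else ⊥))
      ≤ ∑ i ∈ (univ : Finset (Fin m)), Submodule.map (P i) C := by
    rw [Submodule.add_eq_sup, Submodule.add_eq_sup]
    refine sup_le (sup_le ?_ ?_) ?_
    · refine mySum_le _ _ _ fun i hi => ?_
      obtain ⟨-, hi1, hi2⟩ := Finset.mem_filter.mp hi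
      exact (hB' i hi1 hi2).trans (myLe_sum univ (fun i => Submodule.map (P i) C) (mem_univ i))
    · refine mySum_le _ _ _ fun i hi => ?_
      obtain ⟨j, hj⟩ := Finset.card_eq_one.mp (Finset.mem_filter.mp hi).2
      rw [hj, Finset.sum_singleton]
      exact (hB'' i j hj).trans (myLe_sum univ (fun i => Submodule.map (P i) C) (mem_univ i))
    · by_cases hex : ∃ i, S i = (univ : Finset (Fin n))
      · rw [if_pos hex]
        obtain ⟨i1, hi1⟩ := hex
        refine le_trans (fun c hc => ?_) (myLe_sum univ (fun i => Submodule.map (P i) C) (mem_univ i1))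
        refine ⟨c, hc, ?_⟩
        rw [hP]
        show (∑ j ∈ S i1, myProj A hA j) c = c
        rw [hi1, LinearMap.sum_apply]
        exact myProj_sum A hA c
      · rw [if_neg hex]; exact bot_le
  have step1 := Submodule.finrank_mono (hW.trans hUnivT)
  have step2 := myFinrank_sum_le (univ.erase i0) (fun i => Submodule.map (P i) C)
  have step3 : ∑ i ∈ univ.erase i0, Module.finrank F (Submodule.map (P i) C)
      ≤ ∑ _i ∈ univ.erase i0, Module.finrank F C :=
    Finset.sum_le_sum fun i _ => Submodule.finrank_map_le _ _
  have step4 : ∑ _i ∈ univ.erase i0, Module.finrank F C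
      = (m - 1) * Module.finrank F C := by
    rw [Finset.sum_const, Finset.card_erase_of_mem (mem_univ i0), Finset.card_univ,
      Fintype.card_fin, smul_eq_mul]
  exact step1.trans (step2.trans (step3.trans_eq step4))
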